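/- arXiv:1709.00825 — 9 statements merged into one kernel-verified Lean document; each statement's English description precedes it below -/
import Mathlib

section
/- Let B be a 3×n matrix over ZMod N with associated difference matrix D (rows D_1, D_2, D_3 given by D_1 j = B 0 j - B 1 j, D_2 j = B 0 j - B 2 j, D_3 j = B 1 j - B 2 j). Then the Tanner graph is 6-cycle free if and only if for all pairwise distinct columns j1, j2, j3 one has -D_1 j1 + D_2 j2 - D_3 j3 ≠ 0 in ZMod N (this must hold for every assignment of distinct columns j1, j2, j3 to the three rows). -/
/-- For a 3×n exponent matrix, 6-cycle-freeness of the Tanner graph is equivalent to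
`-D₁ j₁ + D₂ j₂ - D₃ j₃ ≠ 0` for all pairwise distinct columns, where
`D₁ j = B 0 j - B 1 j`, `D₂ j = B 0 j - B 2 j`, `D₃ j = B 1 j - B 2 j`. -/
theorem stmt_1 (n N : ℕ) (B : Matrix (Fin 3) (Fin n) (ZMod N)) :
    (¬ ∃ (i0 i1 i2 : Fin 3) (j0 j1 j2 : Fin n),
        i0 ≠ i1 ∧ i1 ≠ i2 ∧ i0 ≠ i2 ∧ j0 ≠ j1 ∧ j1 ≠ j2 ∧ j0 ≠ j2 ∧
        (B i0 j0 - B i0 j1) + (B i1 j1 - B i1 j2) + (B i2 j2 - B i2 j0) = 0) ↔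
    (∀ j1 j2 j3 : Fin n, j1 ≠ j2 → j1 ≠ j3 → j2 ≠ j3 →
        -(B 0 j1 - B 1 j1) + (B 0 j2 - B 2 j2) - (B 1 j3 - B 2 j3) ≠ 0) := by
  constructor
  · intro h j1 j2 j3 h12 h13 h23 heq
    exact h ⟨0, 1, 2, j2, j1, j3, by decide, by decide, by decide,
      h12.symm, h13, h23, by linear_combination heq⟩
  · rintro h ⟨i0, i1, i2, j0, j1, j2, h01, h12, h02, k01, k12, k02, heq⟩
    have tri : ∀ i : Fin 3, i = 0 ∨ i = 1 ∨ i = 2 := by decide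
    rcases tri i0 with rfl | rfl | rfl <;> rcases tri i1 with rfl | rfl | rfl <;>
      rcases tri i2 with rfl | rfl | rfl <;>
      first
        | exact absurd rfl h01 | exact absurd rfl h12 | exact absurd rfl h02
        | skip
    · exact h j1 j0 j2 (Ne.symm k01) k12 k02 (by linear_combination heq)
    · exact h j0 j1 j2 k01 k02 k12 (by linear_combination -heq)
    · exact h j1 j2 j0 k12 (Ne.symm k01) (Ne.symm k02) (by linear_combination -heq)
    · exact h j0 j2 j1 k02 k01 (Ne.symm k12) (by linear_combination heq)
    · exact h j2 j1 j0 (Ne.symm k12) (Ne.symm k02) (Ne.symm k01) (by linear_combination heq)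
    · exact h j2 j0 j1 (Ne.symm k02) (Ne.symm k12) k01 (by linear_combination -heq)
end

section
/- Let B be an m×n matrix over ZMod N whose first row and first column are identically 0, with m, n ≥ 3. Define the DD-values DD_{(i,i'),(j,j')} = (B i j - B i' j) - (B i j' - B i' j') for 1 ≤ i < i' ≤ m-1 (rows of D indexed by pairs not involving row 0 reduce similarly) and distinct columns j ≠ j'. If for all pairs (i1,i2) ≠ (i1',i2') of row-pairs and all column-pairs the corresponding DD-values are pairwise distinct and nonzero (the 8-cycle-free condition on DD), then for every 3×3 submatrix containing the first (all-zero) row, all six Fossorier 6-cycle sums are nonzero; i.e., the nonexistence of 8-cycles implies the nonexistence of 6-cycles involving the first row. -/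
set_option maxHeartbeats 1000000 in
/-- For an exponent matrix whose first row and first column are zero, the 8-cycle-free
condition on the matrix `DD` (all entries nonzero and pairwise distinct) implies that
every Fossorier 6-cycle sum through a 3×3 submatrix containing the first row is nonzero. -/
theorem stmt_3 (m n N : ℕ) (hm : 3 ≤ m) (hn : 3 ≤ n)
    (B : Matrix (Fin m) (Fin n) (ZMod N))
    (hrow : ∀ j, B ⟨0, by omega⟩ j = 0)
    (hcol : ∀ i, B i ⟨0, by omega⟩ = 0)
    (hnz : ∀ (i i' : Fin m) (j j' : Fin n), i < i' → j ≠ j' →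
      (B i j - B i' j) - (B i j' - B i' j') ≠ 0)
    (hdist : ∀ (i1 i2 i1' i2' : Fin m) (j1 j2 j1' j2' : Fin n),
      i1 < i2 → i1' < i2' → j1 ≠ j2 → j1' ≠ j2' →
      (i1, i2, j1, j2) ≠ (i1', i2', j1', j2') →
      (B i1 j1 - B i2 j1) - (B i1 j2 - B i2 j2) ≠
        (B i1' j1' - B i2' j1') - (B i1' j2' - B i2' j2')) :
    ∀ (i i' : Fin m), (⟨0, by omega⟩ : Fin m) < i → i < i' →
      ∀ (i0 i1 i2 : Fin m), ({i0, i1, i2} : Set (Fin m)) = {⟨0, by omega⟩, i, i'} →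
      ∀ (j0 j1 j2 : Fin n), j0 ≠ j1 → j1 ≠ j2 → j0 ≠ j2 →
      (B i0 j0 - B i0 j1) + (B i1 j1 - B i1 j2) + (B i2 j2 - B i2 j0) ≠ 0 := by
  intro i i' hzi hii' i0 i1 i2 hset j0 j1 j2 h01 h12 h02
  set z : Fin m := ⟨0, by omega⟩ with hz
  have hzi' : z < i' := lt_trans hzi hii'
  have hne_zi : z ≠ i := ne_of_lt hzi
  have hne_zi' : z ≠ i' := ne_of_lt hzi'
  have hne_ii' : i ≠ i' := ne_of_lt hii'
  have key := Set.ext_iff.mp hset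
  have h0 : i0 = z ∨ i0 = i ∨ i0 = i' := by simpa using (key i0).mp (by simp)
  have h1 : i1 = z ∨ i1 = i ∨ i1 = i' := by simpa using (key i1).mp (by simp)
  have h2 : i2 = z ∨ i2 = i ∨ i2 = i' := by simpa using (key i2).mp (by simp)
  have hmz : z = i0 ∨ z = i1 ∨ z = i2 := by simpa using (key z).mpr (by simp)
  have hmi : i = i0 ∨ i = i1 ∨ i = i2 := by simpa using (key i).mpr (by simp)
  have hmi' : i' = i0 ∨ i' = i1 ∨ i' = i2 := by simpa using (key i').mpr (by simp)
  intro hsum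
  have tne : ∀ (a b c d : Fin n), ((z, i, a, b) : Fin m × Fin m × Fin n × Fin n) ≠ (z, i', c, d) :=
    fun a b c d h => hne_ii' (congrArg (fun p => p.2.1) h)
  have tne' : ∀ (a b c d : Fin n), ((z, i', a, b) : Fin m × Fin m × Fin n × Fin n) ≠ (z, i, c, d) :=
    fun a b c d h => hne_ii' (congrArg (fun p => p.2.1) h).symm
  rcases h0 with rfl|rfl|rfl <;> rcases h1 with rfl|rfl|rfl <;> rcases h2 with rfl|rfl|rfl <;>
  first
  | exact hdist _ _ _ _ j2 j1 j2 j0 hzi hzi' h12.symm h02.symm (tne _ _ _ _) (by linear_combination hsum)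
  | exact hdist _ _ _ _ j2 j1 j2 j0 hzi' hzi h12.symm h02.symm (tne' _ _ _ _) (by linear_combination hsum)
  | exact hdist _ _ _ _ j1 j0 j2 j0 hzi hzi' h01.symm h02.symm (tne _ _ _ _) (by linear_combination hsum)
  | exact hdist _ _ _ _ j1 j0 j2 j0 hzi' hzi h01.symm h02.symm (tne' _ _ _ _) (by linear_combination hsum)
  | exact hdist _ _ _ _ j1 j0 j1 j2 hzi hzi' h01.symm h12 (tne _ _ _ _) (by linear_combination hsum)
  | exact hdist _ _ _ _ j1 j0 j1 j2 hzi' hzi h01.symm h12 (tne' _ _ _ _) (by linear_combination hsum)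
  | (rcases hmz with h|h|h <;> rcases hmi with h'|h'|h' <;> rcases hmi' with h''|h''|h'' <;>
      first
      | exact hne_zi h
      | exact hne_zi' h
      | exact hne_zi h'.symm
      | exact hne_ii' h'
      | exact hne_zi' h''.symm
      | exact hne_ii' h''.symm)
end

section
/- Let B be an m×n matrix over ZMod N, m ≥ 2, n ≥ 2, such that the Tanner graph of the associated QC-LDPC code has girth at least 10 (equivalently, the 8-cycle-free DD-condition holds: for each row-pair (i,i') with i < i' and each ordered pair of distinct columns (j,j'), the value (B i j - B i' j) - (B i j' - B i' j') is nonzero in ZMod N, and all these values over all row-pairs and ordered column-pairs are pairwise distinct). Then N ≥ 2·C(n,2)·C(m,2) + 1 = m(m-1)n(n-1)/2 + 1. -/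
open Finset

lemma card_lt_pairs (m : ℕ) :
    ((univ : Finset (Fin m × Fin m)).filter fun p => p.1 < p.2).card = m.choose 2 := by
  have h1 : ((univ : Finset (Fin m × Fin m)).filter fun p => p.1 < p.2).card
      = ∑ a : Fin m, (Ioi a).card := by
    rw [Finset.card_filter, Fintype.sum_prod_type]
    refine Finset.sum_congr rfl fun a _ => ?_
    rw [← Finset.card_filter]
    congr 1
    ext b
    simp [Finset.mem_Ioi]
  have h2 : ∑ a : Fin m, (Ioi a).card = ∑ i ∈ range m, (m - 1 - i) := by
    rw [← Fin.sum_univ_eq_sum_range (fun i => m - 1 - i) m]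
    exact Finset.sum_congr rfl fun a _ => Fin.card_Ioi a
  rw [h1, h2, Finset.sum_range_reflect (fun j => j) m, Finset.sum_range_id,
    Nat.choose_two_right]

/-- If the Tanner graph of the QC-LDPC code with exponent matrix `B` has girth at least 10
(all `DD`-entries nonzero and pairwise distinct), then `N ≥ 2·C(n,2)·C(m,2) + 1`. -/
theorem stmt_4 (m n N : ℕ) (hm : 2 ≤ m) (hn : 2 ≤ n) (hN : 0 < N)
    (B : Matrix (Fin m) (Fin n) (ZMod N))
    (hnz : ∀ (i i' : Fin m) (j j' : Fin n), i < i' → j ≠ j' →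
      (B i j - B i' j) - (B i j' - B i' j') ≠ 0)
    (hdist : ∀ (i1 i2 i1' i2' : Fin m) (j1 j2 j1' j2' : Fin n),
      i1 < i2 → i1' < i2' → j1 ≠ j2 → j1' ≠ j2' →
      (i1, i2, j1, j2) ≠ (i1', i2', j1', j2') →
      (B i1 j1 - B i2 j1) - (B i1 j2 - B i2 j2) ≠
        (B i1' j1' - B i2' j1') - (B i1' j2' - B i2' j2')) :
    2 * Nat.choose n 2 * Nat.choose m 2 + 1 ≤ N := by
  haveI : NeZero N := ⟨hN.ne'⟩
  set s : Finset ((Fin m × Fin m) × (Fin n × Fin n)) :=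
    ((univ : Finset (Fin m × Fin m)).filter fun p => p.1 < p.2) ×ˢ
      (univ : Finset (Fin n)).offDiag with hs
  set t : Finset (ZMod N) := (univ : Finset (ZMod N)).erase 0 with ht
  set f : (Fin m × Fin m) × (Fin n × Fin n) → ZMod N := fun p =>
    (B p.1.1 p.2.1 - B p.1.2 p.2.1) - (B p.1.1 p.2.2 - B p.1.2 p.2.2) with hf
  have hmem : ∀ p ∈ s, p.1.1 < p.1.2 ∧ p.2.1 ≠ p.2.2 := by
    intro p hp
    rw [hs, Finset.mem_product, Finset.mem_filter, Finset.mem_offDiag] at hp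
    exact ⟨hp.1.2, hp.2.2.2⟩
  have hcard : s.card ≤ t.card := by
    apply Finset.card_le_card_of_injOn f
    · intro p hp
      obtain ⟨h1, h2⟩ := hmem p hp
      exact Finset.mem_erase.mpr ⟨hnz _ _ _ _ h1 h2, Finset.mem_univ _⟩
    · intro p hp q hq hfq
      by_contra hne
      obtain ⟨h1, h2⟩ := hmem p hp
      obtain ⟨h1', h2'⟩ := hmem q hq
      refine hdist p.1.1 p.1.2 q.1.1 q.1.2 p.2.1 p.2.2 q.2.1 q.2.2 h1 h1' h2 h2' ?_ hfq
      intro h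
      apply hne
      obtain ⟨e1, e2, e3⟩ : p.1.1 = q.1.1 ∧ p.1.2 = q.1.2 ∧ p.2 = q.2 := by simpa using h
      exact Prod.ext (Prod.ext e1 e2) e3
  have hsc : s.card = m.choose 2 * (n * n - n) := by
    rw [hs, Finset.card_product, card_lt_pairs, Finset.offDiag_card, Finset.card_univ,
      Fintype.card_fin]
  have htc : t.card = N - 1 := by
    rw [ht, Finset.card_erase_of_mem (Finset.mem_univ _), Finset.card_univ, ZMod.card]
  have h2n : 2 * n.choose 2 = n * n - n := by
    rw [Nat.choose_two_right]
    have hev : 2 ∣ n * (n - 1) := (Nat.even_mul_pred_self n).two_dvd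
    have := Nat.mul_div_cancel' hev
    have hmul : n * (n - 1) = n * n - n := by
      cases n with
      | zero => simp
      | succ k => simp [Nat.succ_sub_one, Nat.mul_succ, Nat.succ_mul]
    omega
  have key : m.choose 2 * (n * n - n) ≤ N - 1 := hsc ▸ htc ▸ hcard
  have : 2 * n.choose 2 * m.choose 2 = m.choose 2 * (n * n - n) := by
    rw [h2n]; ring
  omega
end

section
/- Let B be a multiple-edge exponent matrix: an m×n array whose (i,j) entry is a finite set B_{ij} ⊆ ZMod N. Suppose the associated Tanner graph has girth at least 6 (no 4-cycles), i.e.: (1) for every entry and every two distinct elements x, y ∈ B_{ij}, 2(x-y) ≠ 0 in ZMod N; (2) within each row i, all differences x - y with x ≠ y ∈ B_{ij} over all columns j are pairwise distinct; (3) within each column j, all such differences over all rows i are pairwise distinct; (4) for each pair of rows i ≠ i' and each column j, all values x - y with x ∈ B_{ij}, y ∈ B_{i'j}, taken over all columns j, are pairwise distinct. Then N ≥ max(A, B, C) where A = max over rows i of 2·Σ_j C(|B_{ij}|, 2), B = max over columns j of 2·Σ_i C(|B_{ij}|, 2), and C = max over row pairs i ≠ i' of Σ_j |B_{ij}|·|B_{i'j}|.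 -/
private lemma two_mul_choose_two' (k : ℕ) : 2 * k.choose 2 = k * k - k := by
  induction k with
  | zero => rfl
  | succ k ih =>
    rw [Nat.choose_succ_succ, Nat.choose_one_right]
    have h : (k + 1) * (k + 1) = k * k + 2 * k + 1 := by ring
    have e : Nat.succ 1 = 2 := rfl
    have h2 : (k + 1) * (k + 1) - (k + 1) = k * k + k := by rw [h]; omega
    have hk : k ≤ k * k := by nlinarith
    rw [e, h2]
    omega

/-- Lower bound on the lifting degree of a multiple-edge QC-LDPC code with girth at
least 6: `N ≥ max(A, B, C)`, expressed as the three families of inequalities. -/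
theorem stmt_7 (m n N : ℕ) (hN : 0 < N) (B : Fin m → Fin n → Finset (ZMod N))
    (h1 : ∀ (i : Fin m) (j : Fin n), ∀ x ∈ B i j, ∀ y ∈ B i j, x ≠ y → 2 * (x - y) ≠ 0)
    (h2 : ∀ (i : Fin m) (j j' : Fin n), ∀ x ∈ B i j, ∀ y ∈ B i j,
      ∀ x' ∈ B i j', ∀ y' ∈ B i j', x ≠ y → x' ≠ y' →
      (j, x, y) ≠ (j', x', y') → x - y ≠ x' - y')
    (h3 : ∀ (j : Fin n) (i i' : Fin m), ∀ x ∈ B i j, ∀ y ∈ B i j,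
      ∀ x' ∈ B i' j, ∀ y' ∈ B i' j, x ≠ y → x' ≠ y' →
      (i, x, y) ≠ (i', x', y') → x - y ≠ x' - y')
    (h4 : ∀ (i i' : Fin m), i ≠ i' → ∀ (j j' : Fin n),
      ∀ x ∈ B i j, ∀ y ∈ B i' j, ∀ x' ∈ B i j', ∀ y' ∈ B i' j',
      (j, x, y) ≠ (j', x', y') → x - y ≠ x' - y') :
    (∀ i : Fin m, 2 * ∑ j, Nat.choose (B i j).card 2 ≤ N) ∧
    (∀ j : Fin n, 2 * ∑ i, Nat.choose (B i j).card 2 ≤ N) ∧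
    (∀ i i' : Fin m, i ≠ i' → ∑ j, (B i j).card * (B i' j).card ≤ N) := by
  haveI : NeZero N := ⟨hN.ne'⟩
  classical
  have cardZ : Fintype.card (ZMod N) = N := ZMod.card N
  refine ⟨?_, ?_, ?_⟩
  · -- rows
    intro i
    set S : Finset (Fin n × ZMod N × ZMod N) :=
      Finset.univ.biUnion (fun j => (B i j).offDiag.image (fun p => (j, p))) with hSdef
    have hmem : ∀ p : Fin n × ZMod N × ZMod N, p ∈ S →
        p.2.1 ∈ B i p.1 ∧ p.2.2 ∈ B i p.1 ∧ p.2.1 ≠ p.2.2 := by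
      intro p hp
      simp only [hSdef, Finset.mem_biUnion, Finset.mem_image, Finset.mem_univ,
        true_and] at hp
      obtain ⟨j, q, hq, rfl⟩ := hp
      exact Finset.mem_offDiag.mp hq
    have hcard : S.card = ∑ j, 2 * Nat.choose (B i j).card 2 := by
      rw [hSdef, Finset.card_biUnion]
      · refine Finset.sum_congr rfl fun j _ => ?_
        rw [Finset.card_image_of_injective _ (fun a b hab => by simpa using hab),
          Finset.offDiag_card, two_mul_choose_two']
      · intro j _ j' _ hjj'
        refine Finset.disjoint_left.mpr fun x hx hx' => ?_
        simp only [Finset.mem_image] at hx hx'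
        obtain ⟨p, _, rfl⟩ := hx
        obtain ⟨q, _, hq⟩ := hx'
        exact hjj' (congrArg Prod.fst hq).symm
    have hinj : Set.InjOn (fun p : Fin n × ZMod N × ZMod N => p.2.1 - p.2.2) S := by
      intro a ha b hb hab
      obtain ⟨ha1, ha2, ha3⟩ := hmem a ha
      obtain ⟨hb1, hb2, hb3⟩ := hmem b hb
      by_contra hne
      exact h2 i a.1 b.1 a.2.1 ha1 a.2.2 ha2 b.2.1 hb1 b.2.2 hb2 ha3 hb3
        (by simpa [Prod.ext_iff] using hne) hab
    calc 2 * ∑ j, Nat.choose (B i j).card 2 = S.card := by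
          rw [hcard, Finset.mul_sum]
      _ ≤ (Finset.univ : Finset (ZMod N)).card :=
          Finset.card_le_card_of_injOn _ (fun _ _ => Finset.mem_univ _) hinj
      _ = N := by rw [Finset.card_univ, cardZ]
  · -- columns
    intro j
    set S : Finset (Fin m × ZMod N × ZMod N) :=
      Finset.univ.biUnion (fun i => (B i j).offDiag.image (fun p => (i, p))) with hSdef
    have hmem : ∀ p : Fin m × ZMod N × ZMod N, p ∈ S →
        p.2.1 ∈ B p.1 j ∧ p.2.2 ∈ B p.1 j ∧ p.2.1 ≠ p.2.2 := by
      intro p hp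
      simp only [hSdef, Finset.mem_biUnion, Finset.mem_image, Finset.mem_univ,
        true_and] at hp
      obtain ⟨i, q, hq, rfl⟩ := hp
      exact Finset.mem_offDiag.mp hq
    have hcard : S.card = ∑ i, 2 * Nat.choose (B i j).card 2 := by
      rw [hSdef, Finset.card_biUnion]
      · refine Finset.sum_congr rfl fun i _ => ?_
        rw [Finset.card_image_of_injective _ (fun a b hab => by simpa using hab),
          Finset.offDiag_card, two_mul_choose_two']
      · intro i _ i' _ hii'
        refine Finset.disjoint_left.mpr fun x hx hx' => ?_
        simp only [Finset.mem_image] at hx hx'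
        obtain ⟨p, _, rfl⟩ := hx
        obtain ⟨q, _, hq⟩ := hx'
        exact hii' (congrArg Prod.fst hq).symm
    have hinj : Set.InjOn (fun p : Fin m × ZMod N × ZMod N => p.2.1 - p.2.2) S := by
      intro a ha b hb hab
      obtain ⟨ha1, ha2, ha3⟩ := hmem a ha
      obtain ⟨hb1, hb2, hb3⟩ := hmem b hb
      by_contra hne
      exact h3 j a.1 b.1 a.2.1 ha1 a.2.2 ha2 b.2.1 hb1 b.2.2 hb2 ha3 hb3
        (by simpa [Prod.ext_iff] using hne) hab
    calc 2 * ∑ i, Nat.choose (B i j).card 2 = S.card := by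
          rw [hcard, Finset.mul_sum]
      _ ≤ (Finset.univ : Finset (ZMod N)).card :=
          Finset.card_le_card_of_injOn _ (fun _ _ => Finset.mem_univ _) hinj
      _ = N := by rw [Finset.card_univ, cardZ]
  · -- row pairs
    intro i i' hii'
    set S : Finset (Fin n × ZMod N × ZMod N) :=
      Finset.univ.biUnion (fun j => ((B i j) ×ˢ (B i' j)).image (fun p => (j, p))) with hSdef
    have hmem : ∀ p : Fin n × ZMod N × ZMod N, p ∈ S →
        p.2.1 ∈ B i p.1 ∧ p.2.2 ∈ B i' p.1 := by
      intro p hp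
      simp only [hSdef, Finset.mem_biUnion, Finset.mem_image, Finset.mem_univ,
        true_and] at hp
      obtain ⟨j, q, hq, rfl⟩ := hp
      exact Finset.mem_product.mp hq
    have hcard : S.card = ∑ j, (B i j).card * (B i' j).card := by
      rw [hSdef, Finset.card_biUnion]
      · refine Finset.sum_congr rfl fun j _ => ?_
        rw [Finset.card_image_of_injective _ (fun a b hab => by simpa using hab),
          Finset.card_product]
      · intro j _ j' _ hjj'
        refine Finset.disjoint_left.mpr fun x hx hx' => ?_
        simp only [Finset.mem_image] at hx hx'
        obtain ⟨p, _, rfl⟩ := hx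
        obtain ⟨q, _, hq⟩ := hx'
        exact hjj' (congrArg Prod.fst hq).symm
    have hinj : Set.InjOn (fun p : Fin n × ZMod N × ZMod N => p.2.1 - p.2.2) S := by
      intro a ha b hb hab
      obtain ⟨ha1, ha2⟩ := hmem a ha
      obtain ⟨hb1, hb2⟩ := hmem b hb
      by_contra hne
      exact h4 i i' hii' a.1 b.1 a.2.1 ha1 a.2.2 ha2 b.2.1 hb1 b.2.2 hb2
        (by simpa [Prod.ext_iff] using hne) hab
    calc ∑ j, (B i j).card * (B i' j).card = S.card := hcard.symm
      _ ≤ (Finset.univ : Finset (ZMod N)).card :=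
          Finset.card_le_card_of_injOn _ (fun _ _ => Finset.mem_univ _) hinj
      _ = N := by rw [Finset.card_univ, cardZ]
end

section
/- Let B be a multiple-edge exponent matrix over ZMod N in which every entry B_{ij} (for i ∈ Fin 2, j ∈ Fin n) is a 2-element subset of ZMod N (a (4,2n)-regular multiple-edge code with all base-matrix entries equal to 2). If the associated Tanner graph has girth at least 6 (conditions (1)-(4) of the multiple-edge 4-cycle-freeness), then N ≥ 4n. -/
/-- For a multiple-edge (4,2n)-regular exponent matrix with all entries of cardinality 2,
girth at least 6 forces `N ≥ 4n`. -/
theorem stmt_8 (n N : ℕ) (hN : 0 < N) (B : Fin 2 → Fin n → Finset (ZMod N))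
    (hcard : ∀ (i : Fin 2) (j : Fin n), (B i j).card = 2)
    (h1 : ∀ (i : Fin 2) (j : Fin n), ∀ x ∈ B i j, ∀ y ∈ B i j, x ≠ y → 2 * (x - y) ≠ 0)
    (h2 : ∀ (i : Fin 2) (j j' : Fin n), ∀ x ∈ B i j, ∀ y ∈ B i j,
      ∀ x' ∈ B i j', ∀ y' ∈ B i j', x ≠ y → x' ≠ y' →
      (j, x, y) ≠ (j', x', y') → x - y ≠ x' - y')
    (h3 : ∀ (j : Fin n) (i i' : Fin 2), ∀ x ∈ B i j, ∀ y ∈ B i j,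
      ∀ x' ∈ B i' j, ∀ y' ∈ B i' j, x ≠ y → x' ≠ y' →
      (i, x, y) ≠ (i', x', y') → x - y ≠ x' - y')
    (h4 : ∀ (i i' : Fin 2), i ≠ i' → ∀ (j j' : Fin n),
      ∀ x ∈ B i j, ∀ y ∈ B i' j, ∀ x' ∈ B i j', ∀ y' ∈ B i' j',
      (j, x, y) ≠ (j', x', y') → x - y ≠ x' - y') :
    4 * n ≤ N := by
  haveI : NeZero N := ⟨hN.ne'⟩
  classical
  set T : Finset (Fin n × ZMod N × ZMod N) :=
    Finset.univ.biUnion (fun j : Fin n => (B 0 j ×ˢ B 1 j).image (Prod.mk j)) with hT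
  have hmem : ∀ p : Fin n × ZMod N × ZMod N,
      p ∈ T ↔ p.2.1 ∈ B 0 p.1 ∧ p.2.2 ∈ B 1 p.1 := by
    intro p
    simp only [hT, Finset.mem_biUnion, Finset.mem_image, Finset.mem_product, Finset.mem_univ,
      true_and]
    constructor
    · rintro ⟨j, ⟨q, ⟨hq1, hq2⟩, rfl⟩⟩
      exact ⟨hq1, hq2⟩
    · rintro ⟨h1', h2'⟩
      exact ⟨p.1, ⟨p.2, ⟨h1', h2'⟩, rfl⟩⟩
  have hTcard : T.card = 4 * n := by
    rw [hT, Finset.card_biUnion]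
    · have : ∀ j : Fin n, ((B 0 j ×ˢ B 1 j).image (Prod.mk j)).card = 4 := by
        intro j
        rw [Finset.card_image_of_injective _ (fun a b h => (Prod.ext_iff.mp h).2),
          Finset.card_product, hcard, hcard]
      simp [this, Finset.sum_const, Finset.card_univ, mul_comm]
    · intro j _ j' _ hjj'
      simp only [Finset.disjoint_left, Finset.mem_image]
      rintro p ⟨q, _, rfl⟩ ⟨q', _, h⟩
      exact hjj' (congrArg Prod.fst h).symm
  have hinj : Set.InjOn (fun p : Fin n × ZMod N × ZMod N => p.2.1 - p.2.2) T := by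
    rintro ⟨j, x, y⟩ hp ⟨j', x', y'⟩ hq heq
    rw [Finset.mem_coe, hmem] at hp hq
    by_contra hne
    exact h4 0 1 (by decide) j j' x hp.1 y hp.2 x' hq.1 y' hq.2 hne heq
  have := Finset.card_le_card_of_injOn (fun p : Fin n × ZMod N × ZMod N => p.2.1 - p.2.2)
    (fun _ _ => Finset.mem_univ _) hinj
  rw [hTcard, Finset.card_univ, ZMod.card] at this
  exact this
end

section
/- Let B be a 4×n matrix over ZMod N with difference-matrix rows D_1,...,D_6 defined by D_1 j = B 0 j - B 1 j, D_2 j = B 0 j - B 2 j, D_3 j = B 0 j - B 3 j, D_4 j = B 1 j - B 2 j, D_5 j = B 1 j - B 3 j, D_6 j = B 2 j - B 3 j. Then the Tanner graph is 6-cycle free if and only if for all pairwise distinct columns j1, j2, j3: -D_1 j1 + D_2 j2 - D_4 j3 ≠ 0, -D_1 j1 + D_3 j2 - D_5 j3 ≠ 0, -D_2 j1 + D_3 j2 - D_6 j3 ≠ 0, and -D_4 j1 + D_5 j2 - D_6 j3 ≠ 0 (all in ZMod N, over all assignments of distinct columns). -/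
set_option maxHeartbeats 4000000 in
/-- For a 4×n exponent matrix, 6-cycle-freeness is equivalent to the four inequalities
on the row triples (1,2,4), (1,3,5), (2,3,6), (4,5,6) of the difference matrix `D`. -/
theorem stmt_12 (n N : ℕ) (B : Matrix (Fin 4) (Fin n) (ZMod N)) :
    (¬ ∃ (i0 i1 i2 : Fin 4) (j0 j1 j2 : Fin n),
        i0 ≠ i1 ∧ i1 ≠ i2 ∧ i0 ≠ i2 ∧ j0 ≠ j1 ∧ j1 ≠ j2 ∧ j0 ≠ j2 ∧
        (B i0 j0 - B i0 j1) + (B i1 j1 - B i1 j2) + (B i2 j2 - B i2 j0) = 0) ↔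
    (∀ j1 j2 j3 : Fin n, j1 ≠ j2 → j1 ≠ j3 → j2 ≠ j3 →
        (-(B 0 j1 - B 1 j1) + (B 0 j2 - B 2 j2) - (B 1 j3 - B 2 j3) ≠ 0) ∧
        (-(B 0 j1 - B 1 j1) + (B 0 j2 - B 3 j2) - (B 1 j3 - B 3 j3) ≠ 0) ∧
        (-(B 0 j1 - B 2 j1) + (B 0 j2 - B 3 j2) - (B 2 j3 - B 3 j3) ≠ 0) ∧
        (-(B 1 j1 - B 2 j1) + (B 1 j2 - B 3 j2) - (B 2 j3 - B 3 j3) ≠ 0)) := by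
  constructor
  · intro hnc j1 j2 j3 h12 h13 h23
    refine ⟨?_, ?_, ?_, ?_⟩ <;> intro hz <;> apply hnc
    · exact ⟨0, 1, 2, j2, j1, j3, by decide, by decide, by decide, h12.symm, h13, h23,
        by linear_combination hz⟩
    · exact ⟨0, 1, 3, j2, j1, j3, by decide, by decide, by decide, h12.symm, h13, h23,
        by linear_combination hz⟩
    · exact ⟨0, 2, 3, j2, j1, j3, by decide, by decide, by decide, h12.symm, h13, h23,
        by linear_combination hz⟩
    · exact ⟨1, 2, 3, j2, j1, j3, by decide, by decide, by decide, h12.symm, h13, h23,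
        by linear_combination hz⟩
  · rintro h ⟨i0, i1, i2, j0, j1, j2, h01, h12, h02, hj01, hj12, hj02, hsum⟩
    have h4 : ∀ i : Fin 4, i = 0 ∨ i = 1 ∨ i = 2 ∨ i = 3 := by decide
    rcases h4 i0 with rfl | rfl | rfl | rfl <;>
    rcases h4 i1 with rfl | rfl | rfl | rfl <;>
    rcases h4 i2 with rfl | rfl | rfl | rfl <;>
    first
      | exact h01 rfl
      | exact h12 rfl
      | exact h02 rfl
      | exact (h j0 j1 j2 hj01 hj02 hj12).1 (by linear_combination hsum)
      | exact (h j0 j1 j2 hj01 hj02 hj12).1 (by linear_combination -hsum)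
      | exact (h j0 j1 j2 hj01 hj02 hj12).2.1 (by linear_combination hsum)
      | exact (h j0 j1 j2 hj01 hj02 hj12).2.1 (by linear_combination -hsum)
      | exact (h j0 j1 j2 hj01 hj02 hj12).2.2.1 (by linear_combination hsum)
      | exact (h j0 j1 j2 hj01 hj02 hj12).2.2.1 (by linear_combination -hsum)
      | exact (h j0 j1 j2 hj01 hj02 hj12).2.2.2 (by linear_combination hsum)
      | exact (h j0 j1 j2 hj01 hj02 hj12).2.2.2 (by linear_combination -hsum)
      | exact (h j0 j2 j1 hj02 hj01 hj12.symm).1 (by linear_combination hsum)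
      | exact (h j0 j2 j1 hj02 hj01 hj12.symm).1 (by linear_combination -hsum)
      | exact (h j0 j2 j1 hj02 hj01 hj12.symm).2.1 (by linear_combination hsum)
      | exact (h j0 j2 j1 hj02 hj01 hj12.symm).2.1 (by linear_combination -hsum)
      | exact (h j0 j2 j1 hj02 hj01 hj12.symm).2.2.1 (by linear_combination hsum)
      | exact (h j0 j2 j1 hj02 hj01 hj12.symm).2.2.1 (by linear_combination -hsum)
      | exact (h j0 j2 j1 hj02 hj01 hj12.symm).2.2.2 (by linear_combination hsum)
      | exact (h j0 j2 j1 hj02 hj01 hj12.symm).2.2.2 (by linear_combination -hsum)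
      | exact (h j1 j0 j2 hj01.symm hj12 hj02).1 (by linear_combination hsum)
      | exact (h j1 j0 j2 hj01.symm hj12 hj02).1 (by linear_combination -hsum)
      | exact (h j1 j0 j2 hj01.symm hj12 hj02).2.1 (by linear_combination hsum)
      | exact (h j1 j0 j2 hj01.symm hj12 hj02).2.1 (by linear_combination -hsum)
      | exact (h j1 j0 j2 hj01.symm hj12 hj02).2.2.1 (by linear_combination hsum)
      | exact (h j1 j0 j2 hj01.symm hj12 hj02).2.2.1 (by linear_combination -hsum)
      | exact (h j1 j0 j2 hj01.symm hj12 hj02).2.2.2 (by linear_combination hsum)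
      | exact (h j1 j0 j2 hj01.symm hj12 hj02).2.2.2 (by linear_combination -hsum)
      | exact (h j1 j2 j0 hj12 hj01.symm hj02.symm).1 (by linear_combination hsum)
      | exact (h j1 j2 j0 hj12 hj01.symm hj02.symm).1 (by linear_combination -hsum)
      | exact (h j1 j2 j0 hj12 hj01.symm hj02.symm).2.1 (by linear_combination hsum)
      | exact (h j1 j2 j0 hj12 hj01.symm hj02.symm).2.1 (by linear_combination -hsum)
      | exact (h j1 j2 j0 hj12 hj01.symm hj02.symm).2.2.1 (by linear_combination hsum)
      | exact (h j1 j2 j0 hj12 hj01.symm hj02.symm).2.2.1 (by linear_combination -hsum)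
      | exact (h j1 j2 j0 hj12 hj01.symm hj02.symm).2.2.2 (by linear_combination hsum)
      | exact (h j1 j2 j0 hj12 hj01.symm hj02.symm).2.2.2 (by linear_combination -hsum)
      | exact (h j2 j0 j1 hj02.symm hj12.symm hj01).1 (by linear_combination hsum)
      | exact (h j2 j0 j1 hj02.symm hj12.symm hj01).1 (by linear_combination -hsum)
      | exact (h j2 j0 j1 hj02.symm hj12.symm hj01).2.1 (by linear_combination hsum)
      | exact (h j2 j0 j1 hj02.symm hj12.symm hj01).2.1 (by linear_combination -hsum)
      | exact (h j2 j0 j1 hj02.symm hj12.symm hj01).2.2.1 (by linear_combination hsum)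
      | exact (h j2 j0 j1 hj02.symm hj12.symm hj01).2.2.1 (by linear_combination -hsum)
      | exact (h j2 j0 j1 hj02.symm hj12.symm hj01).2.2.2 (by linear_combination hsum)
      | exact (h j2 j0 j1 hj02.symm hj12.symm hj01).2.2.2 (by linear_combination -hsum)
      | exact (h j2 j1 j0 hj12.symm hj02.symm hj01.symm).1 (by linear_combination hsum)
      | exact (h j2 j1 j0 hj12.symm hj02.symm hj01.symm).1 (by linear_combination -hsum)
      | exact (h j2 j1 j0 hj12.symm hj02.symm hj01.symm).2.1 (by linear_combination hsum)
      | exact (h j2 j1 j0 hj12.symm hj02.symm hj01.symm).2.1 (by linear_combination -hsum)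
      | exact (h j2 j1 j0 hj12.symm hj02.symm hj01.symm).2.2.1 (by linear_combination hsum)
      | exact (h j2 j1 j0 hj12.symm hj02.symm hj01.symm).2.2.1 (by linear_combination -hsum)
      | exact (h j2 j1 j0 hj12.symm hj02.symm hj01.symm).2.2.2 (by linear_combination hsum)
      | exact (h j2 j1 j0 hj12.symm hj02.symm hj01.symm).2.2.2 (by linear_combination -hsum)
end

section
/- Consider the 3×4 exponent matrix B over ZMod 37 with rows (0,0,0,0), (0,1,3,24), (0,27,7,19). Then the associated DD-matrix has all 36 entries (18 values together with their negatives, over the 3 row-pairs and 6 unordered column-pairs) pairwise distinct and nonzero in ZMod 37. Consequently B satisfies the 8-cycle-free conditions of Theorem 1 (the 4×4 condition being vacuous for 3 rows) and, since the first row and column are zero, the Tanner graph of the corresponding (3,4)-regular QC-LDPC code has girth at least 10. -/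
/-- Fossorier's condition for a `2k`-cycle in the Tanner graph of the QC-LDPC code with
exponent matrix `B`. -/
def hasFossorierCycle {m n N : ℕ} (B : Matrix (Fin m) (Fin n) (ZMod N)) (k : ℕ)
    [NeZero k] : Prop :=
  ∃ (r : Fin k → Fin m) (c : Fin k → Fin n),
    (∀ t, r t ≠ r (t + 1)) ∧ (∀ t, c t ≠ c (t + 1)) ∧
    ∑ t, (B (r t) (c t) - B (r t) (c (t + 1))) = 0

/-- The concrete 3×4 exponent matrix over `ZMod 37`. -/
def B15 : Matrix (Fin 3) (Fin 4) (ZMod 37) :=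
  !![0, 0, 0, 0; 0, 1, 3, 24; 0, 27, 7, 19]

set_option maxHeartbeats 4000000
set_option maxRecDepth 100000
set_option synthInstance.maxSize 5000
set_option synthInstance.maxHeartbeats 2000000

lemma key2 : ∀ (r0 r1 : Fin 3) (c0 c1 : Fin 4),
    r0 ≠ r1 → c0 ≠ c1 →
    (B15 r0 c0 - B15 r0 c1) + (B15 r1 c1 - B15 r1 c0) ≠ 0 := by decide

lemma key3 : ∀ (r0 r1 r2 : Fin 3) (c0 c1 c2 : Fin 4),
    r0 ≠ r1 → r1 ≠ r2 → r2 ≠ r0 →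
    c0 ≠ c1 → c1 ≠ c2 → c2 ≠ c0 →
    (B15 r0 c0 - B15 r0 c1) + (B15 r1 c1 - B15 r1 c2) +
    (B15 r2 c2 - B15 r2 c0) ≠ 0 := by decide

lemma key4 : ∀ (r0 r1 r2 r3 : Fin 3) (c0 c1 c2 c3 : Fin 4),
    r0 ≠ r1 → r1 ≠ r2 → r2 ≠ r3 → r3 ≠ r0 →
    c0 ≠ c1 → c1 ≠ c2 → c2 ≠ c3 → c3 ≠ c0 →
    (B15 r0 c0 - B15 r0 c1) + (B15 r1 c1 - B15 r1 c2) +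
    (B15 r2 c2 - B15 r2 c3) + (B15 r3 c3 - B15 r3 c0) ≠ 0 := by decide

lemma no2 : ¬ hasFossorierCycle B15 2 := by
  rintro ⟨r, c, hr, hc, hsum⟩
  rw [Fin.sum_univ_two] at hsum
  exact key2 (r 0) (r 1) (c 0) (c 1) (hr 0) (hc 0) hsum

lemma no3 : ¬ hasFossorierCycle B15 3 := by
  rintro ⟨r, c, hr, hc, hsum⟩
  rw [Fin.sum_univ_three] at hsum
  exact key3 (r 0) (r 1) (r 2) (c 0) (c 1) (c 2)
    (hr 0) (hr 1) (hr 2) (hc 0) (hc 1) (hc 2) hsum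

lemma no4 : ¬ hasFossorierCycle B15 4 := by
  rintro ⟨r, c, hr, hc, hsum⟩
  rw [Fin.sum_univ_four] at hsum
  exact key4 (r 0) (r 1) (r 2) (r 3) (c 0) (c 1) (c 2) (c 3)
    (hr 0) (hr 1) (hr 2) (hr 3) (hc 0) (hc 1) (hc 2) (hc 3) hsum

/-- For the given 3×4 exponent matrix over `ZMod 37`, all `DD`-entries are nonzero and
pairwise distinct, and consequently the Tanner graph has no 4-, 6-, or 8-cycles,
i.e. girth at least 10. -/
theorem stmt_15 :
    (∀ (i i' : Fin 3) (j j' : Fin 4), i < i' → j ≠ j' →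
      (B15 i j - B15 i' j) - (B15 i j' - B15 i' j') ≠ 0) ∧
    (∀ (i1 i2 i1' i2' : Fin 3) (j1 j2 j1' j2' : Fin 4),
      i1 < i2 → i1' < i2' → j1 ≠ j2 → j1' ≠ j2' →
      (i1, i2, j1, j2) ≠ (i1', i2', j1', j2') →
      (B15 i1 j1 - B15 i2 j1) - (B15 i1 j2 - B15 i2 j2) ≠
        (B15 i1' j1' - B15 i2' j1') - (B15 i1' j2' - B15 i2' j2')) ∧
    ¬ hasFossorierCycle B15 2 ∧ ¬ hasFossorierCycle B15 3 ∧ ¬ hasFossorierCycle B15 4 := by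
  exact ⟨by decide, by decide, no2, no3, no4⟩
end

section
/- Let B be a multiple-edge exponent matrix over ZMod N (each entry B_{ij} a finite subset of ZMod N). If for some entry B_{ij} there exist distinct x, y ∈ B_{ij} with 3(x - y) = 0 in ZMod N, then the Tanner graph contains a 6-cycle. More generally, for any entry with three distinct elements x, y, z ∈ B_{ij} (cardinality ≥ 3), the sum (x - y) + (y - z) + (z - x) = 0 always, so any base-matrix entry ≥ 3 produces an inevitable 6-cycle regardless of N. -/
/-- Fossorier-type 6-cycle condition for multiple-edge QC-LDPC codes: a closed walk
through cells of the exponent matrix with element choices, where consecutive choices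
within the same cell must differ. -/
def hasSixCycleME {m n N : ℕ} (B : Fin m → Fin n → Finset (ZMod N)) : Prop :=
  ∃ (rw : Fin 3 → Fin m) (cl : Fin 3 → Fin n) (a b : Fin 3 → ZMod N),
    (∀ t, a t ∈ B (rw t) (cl t)) ∧ (∀ t, b t ∈ B (rw t) (cl (t + 1))) ∧
    (∀ t, cl t = cl (t + 1) → a t ≠ b t) ∧
    (∀ t, rw t = rw (t + 1) → b t ≠ a (t + 1)) ∧
    ∑ t, (a t - b t) = 0

/-- If some entry of a multiple-edge exponent matrix has two distinct elements with
`3(x - y) = 0`, the Tanner graph has a 6-cycle; and any entry with three distinct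
elements gives an inevitable 6-cycle since `(x-y)+(y-z)+(z-x) = 0` always. -/
theorem stmt_16 (m n N : ℕ) (B : Fin m → Fin n → Finset (ZMod N)) :
    (∀ (i : Fin m) (j : Fin n),
      (∃ x ∈ B i j, ∃ y ∈ B i j, x ≠ y ∧ 3 * (x - y) = 0) → hasSixCycleME B) ∧
    (∀ (i : Fin m) (j : Fin n) (x y z : ZMod N), x ∈ B i j → y ∈ B i j → z ∈ B i j →
      x ≠ y → y ≠ z → x ≠ z →
      (x - y) + (y - z) + (z - x) = 0 ∧ hasSixCycleME B) := by
  constructor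
  · rintro i j ⟨x, hx, y, hy, hxy, h3⟩
    refine ⟨fun _ => i, fun _ => j, fun _ => x, fun _ => y,
      fun _ => hx, fun _ => hy, fun _ _ => hxy, fun _ _ => hxy.symm, ?_⟩
    simp [Fin.sum_univ_three]
    linear_combination h3
  · intro i j x y z hx hy hz hxy hyz hxz
    refine ⟨by ring, ?_⟩
    refine ⟨fun _ => i, fun _ => j, ![x, y, z], fun t => ![x, y, z] (t + 2),
      ?_, ?_, ?_, ?_, ?_⟩
    · intro t; fin_cases t <;> simpa
    · intro t; fin_cases t <;> simpa
    · intro t _; fin_cases t <;> simp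
      exacts [hxz, hxy.symm, hyz.symm]
    · intro t _; fin_cases t <;> simp
      exacts [hyz.symm, hxz, hxy.symm]
    · simp [Fin.sum_univ_three]
      ring
end

section
/- Let B be an m×n matrix over ZMod N whose associated Tanner graph is 8-cycle free, in the sense that all DD-entries (B i j - B i' j) - (B i j' - B i' j') for i < i' and ordered pairs of distinct columns j ≠ j' are pairwise distinct. Fix any row-pair r = (i,i'). Then the map sending each ordered pair of distinct columns (j,j') to the DD-entry D_r j - D_r j' is injective, and the images for j < j' versus j > j' are negatives of each other; hence the n(n-1)/2 'small' representatives (taking from each pair {x, -x} the one in {1,...,⌊N/2⌋}) are pairwise distinct elements of {1,...,⌊N/2⌋}, giving N ≥ n(n-1) + 1 for each single row-pair. -/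
/-- For an 8-cycle-free exponent matrix, the `DD`-entries of any fixed row-pair are
injective over ordered pairs of distinct columns, reversing the column order negates
the entry, and consequently `N ≥ n(n-1) + 1`. -/
theorem stmt_19 (m n N : ℕ) (hN : 0 < N) (B : Matrix (Fin m) (Fin n) (ZMod N))
    (hdist : ∀ (i1 i2 i1' i2' : Fin m) (j1 j2 j1' j2' : Fin n),
      i1 < i2 → i1' < i2' → j1 ≠ j2 → j1' ≠ j2' →
      (i1, i2, j1, j2) ≠ (i1', i2', j1', j2') →
      (B i1 j1 - B i2 j1) - (B i1 j2 - B i2 j2) ≠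
        (B i1' j1' - B i2' j1') - (B i1' j2' - B i2' j2'))
    (i i' : Fin m) (hii : i < i') :
    (∀ (j1 j2 j1' j2' : Fin n), j1 ≠ j2 → j1' ≠ j2' → (j1, j2) ≠ (j1', j2') →
      (B i j1 - B i' j1) - (B i j2 - B i' j2) ≠
        (B i j1' - B i' j1') - (B i j2' - B i' j2')) ∧
    (∀ (j1 j2 : Fin n),
      (B i j2 - B i' j2) - (B i j1 - B i' j1) =
        -((B i j1 - B i' j1) - (B i j2 - B i' j2))) ∧
    n * (n - 1) + 1 ≤ N := by
  haveI : NeZero N := ⟨hN.ne'⟩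
  have h1 : ∀ (j1 j2 j1' j2' : Fin n), j1 ≠ j2 → j1' ≠ j2' → (j1, j2) ≠ (j1', j2') →
      (B i j1 - B i' j1) - (B i j2 - B i' j2) ≠
        (B i j1' - B i' j1') - (B i j2' - B i' j2') := by
    intro j1 j2 j1' j2' h12 h12' hne
    refine hdist i i' i i' j1 j2 j1' j2' hii hii h12 h12' ?_
    simp only [Ne, Prod.mk.injEq, Prod.ext_iff] at hne ⊢
    tauto
  refine ⟨h1, fun j1 j2 => by ring, ?_⟩
  set f : Fin n × Fin n → ZMod N := fun p => (B i p.1 - B i' p.1) - (B i p.2 - B i' p.2)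
    with hf
  have hinj : Set.InjOn f (Finset.univ.offDiag : Finset (Fin n × Fin n)) := by
    intro p hp q hq hfpq
    simp only [Finset.coe_offDiag, Set.mem_setOf_eq, Finset.mem_coe, Finset.mem_univ,
      Set.mem_prod] at hp hq
    by_contra hne
    exact h1 p.1 p.2 q.1 q.2 hp.2.2 hq.2.2 (by simpa using hne) hfpq
  have hzero : (0 : ZMod N) ∉ Finset.univ.offDiag.image f := by
    intro h0
    obtain ⟨p, hp, hp0⟩ := Finset.mem_image.mp h0
    have hpne : p.1 ≠ p.2 := (Finset.mem_offDiag.mp hp).2.2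
    refine h1 p.1 p.2 p.2 p.1 hpne hpne.symm ?_ ?_
    · exact fun h => hpne (congrArg Prod.fst h)
    · have hp0' : B i p.1 - B i' p.1 - (B i p.2 - B i' p.2) = 0 := hp0
      linear_combination 2 * hp0'
  have hcard : (insert (0 : ZMod N) (Finset.univ.offDiag.image f)).card ≤ N := by
    calc _ ≤ (Finset.univ : Finset (ZMod N)).card := Finset.card_le_univ _
    _ = N := by simp [ZMod.card]
  rw [Finset.card_insert_of_notMem hzero,
    Finset.card_image_of_injOn hinj, Finset.offDiag_card] at hcard
  have hmul : n * (n - 1) = n * n - n := by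
    cases n <;> simp [Nat.mul_sub, Nat.mul_succ]
  simpa [hmul, Finset.card_univ] using hcard
end
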